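/- Let z > 0 and 0 ≤ y ≤ 1 and define K₂(z,y) = (1/2)·∫_y^∞ v·exp(−(z/2)(v + 1/v)) dv. Then K₂(z,y) ≤ √(π/2) · e^{−z}/√z · (1 + 15/(8z) + 105/(128 z²)) holds for all z ≥ 1. -/

import Mathlib

open MeasureTheory
open Real Set Filter

lemma int_pow_gauss (n : ℕ) {b : ℝ} (hb : 0 < b) :
    Integrable fun x : ℝ => x ^ n * Real.exp (-b * x ^ 2) := by
  have h := integrable_rpow_mul_exp_neg_mul_sq hb (s := (n : ℝ))
    (lt_of_lt_of_le (by norm_num) (Nat.cast_nonneg n))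
  simpa [Real.rpow_natCast] using h

lemma gauss_odd {b : ℝ} (n : ℕ) (hn : Odd n) :
    ∫ x : ℝ, x ^ n * Real.exp (-b * x ^ 2) = 0 := by
  have h := MeasureTheory.integral_neg_eq_self
    (fun x : ℝ => x ^ n * Real.exp (-b * x ^ 2)) volume
  simp only [hn.neg_pow, neg_sq, neg_mul] at h
  rw [integral_neg] at h
  simp only [neg_mul]
  linarith

lemma tend_gauss (n : ℕ) {b : ℝ} (hb : 0 < b) :
    Tendsto (fun x : ℝ => x ^ n * Real.exp (-b * x ^ 2)) atTop (nhds 0) := by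
  have h := (rpow_mul_exp_neg_mul_sq_isLittleO_exp_neg hb (n : ℝ)).isBigO
  have h' : (fun x : ℝ => x ^ n * Real.exp (-b * x ^ 2)) =O[atTop]
      fun x : ℝ => Real.exp (-(1/2) * x) := by
    refine h.congr' ?_ (EventuallyEq.refl _ _)
    filter_upwards [] with x
    rw [Real.rpow_natCast]
  refine h'.trans_tendsto ?_
  have h2 : Tendsto (fun x : ℝ => (1/2 : ℝ) * x) atTop atTop :=
    Tendsto.const_mul_atTop (by norm_num) tendsto_id
  have h3 := Real.tendsto_exp_neg_atTop_nhds_zero.comp h2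
  refine h3.congr fun x => by simp [neg_mul]

lemma tend_gauss_bot (n : ℕ) {b : ℝ} (hb : 0 < b) :
    Tendsto (fun x : ℝ => x ^ n * Real.exp (-b * x ^ 2)) atBot (nhds 0) := by
  have h := (tend_gauss n hb).comp tendsto_neg_atBot_atTop
  have h2 : Tendsto (fun x : ℝ => (-x) ^ n * Real.exp (-b * x ^ 2)) atBot (nhds 0) := by
    refine h.congr fun x => by simp [Function.comp, neg_sq]
  rcases Nat.even_or_odd n with he | ho
  · refine h2.congr fun x => by rw [he.neg_pow]
  · have := h2.neg
    rw [neg_zero] at this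
    refine this.congr fun x => by rw [ho.neg_pow]; ring
lemma parts_gauss (m : ℕ) {b : ℝ} (hb : 0 < b) :
    (m + 1 : ℝ) * ∫ x : ℝ, x ^ m * Real.exp (-b * x ^ 2)
      = 2 * b * ∫ x : ℝ, x ^ (m + 2) * Real.exp (-b * x ^ 2) := by
  set F : ℝ → ℝ := fun x => x ^ (m + 1) * Real.exp (-b * x ^ 2) with hF
  set G : ℝ → ℝ := fun x =>
    (m + 1 : ℝ) * (x ^ m * Real.exp (-b * x ^ 2))
      - 2 * b * (x ^ (m + 2) * Real.exp (-b * x ^ 2)) with hG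
  have hd : ∀ x : ℝ, HasDerivAt F (G x) x := by
    intro x
    have h1 : HasDerivAt (fun y : ℝ => -b * y ^ 2) (-b * (2 * x)) x := by
      simpa using (hasDerivAt_pow 2 x).const_mul (-b)
    have h2 : HasDerivAt (fun y : ℝ => y ^ (m + 1) * Real.exp (-b * y ^ 2)) _ x :=
      (hasDerivAt_pow (m + 1) x).mul h1.exp
    convert h2 using 1
    simp only [hG]
    push_cast
    ring
  have hint : Integrable G :=
    ((int_pow_gauss m hb).const_mul _).sub ((int_pow_gauss (m + 2) hb).const_mul _)
  have h1 : ∫ x in Ioi (0:ℝ), G x = 0 - F 0 :=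
    integral_Ioi_of_hasDerivAt_of_tendsto' (fun x _ => hd x) hint.integrableOn
      (tend_gauss (m + 1) hb)
  have h2 : ∫ x in Iic (0:ℝ), G x = F 0 - 0 :=
    integral_Iic_of_hasDerivAt_of_tendsto' (fun x _ => hd x) hint.integrableOn
      (tend_gauss_bot (m + 1) hb)
  have h3 : ∫ x : ℝ, G x = 0 := by
    rw [← intervalIntegral.integral_Iic_add_Ioi hint.integrableOn hint.integrableOn, h1, h2]
    ring
  rw [hG] at h3
  rw [integral_sub ((int_pow_gauss m hb).const_mul _) ((int_pow_gauss (m + 2) hb).const_mul _),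
    integral_const_mul, integral_const_mul] at h3
  linarith

lemma mom0_gauss {b : ℝ} (hb : 0 < b) :
    ∫ x : ℝ, x ^ 0 * Real.exp (-b * x ^ 2) = Real.sqrt (π / b) := by
  simpa using integral_gaussian b

lemma mom2_gauss {b : ℝ} (hb : 0 < b) :
    ∫ x : ℝ, x ^ 2 * Real.exp (-b * x ^ 2) = Real.sqrt (π / b) / (2 * b) := by
  have h := parts_gauss 0 hb
  rw [mom0_gauss hb] at h
  have : (2 * b) ≠ 0 := by positivity
  field_simp at h ⊢
  linarith

lemma mom4_gauss {b : ℝ} (hb : 0 < b) :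
    ∫ x : ℝ, x ^ 4 * Real.exp (-b * x ^ 2) = 3 * Real.sqrt (π / b) / (4 * b ^ 2) := by
  have h := parts_gauss 2 hb
  rw [mom2_gauss hb] at h
  have h2 : (2 * b) ≠ 0 := by positivity
  field_simp at h ⊢
  linarith

noncomputable def K2phi (u : ℝ) : ℝ := ((u + Real.sqrt (u ^ 2 + 4)) / 2) ^ 2

lemma K2p_pos (u : ℝ) : 0 < Real.sqrt (u ^ 2 + 4) :=
  Real.sqrt_pos.mpr (by positivity)

lemma K2p_sq (u : ℝ) : Real.sqrt (u ^ 2 + 4) ^ 2 = u ^ 2 + 4 :=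
  Real.sq_sqrt (by positivity)

lemma K2x_pos (u : ℝ) : 0 < (u + Real.sqrt (u ^ 2 + 4)) / 2 := by
  nlinarith [K2p_sq u, K2p_pos u, sq_nonneg (Real.sqrt (u ^ 2 + 4) + u)]

lemma K2x_inv (u : ℝ) :
    ((u + Real.sqrt (u ^ 2 + 4)) / 2) * ((Real.sqrt (u ^ 2 + 4) - u) / 2) = 1 := by
  linear_combination K2p_sq u / 4

lemma K2phi_deriv (u : ℝ) :
    HasDerivAt K2phi (2 * ((u + Real.sqrt (u ^ 2 + 4)) / 2) ^ 2 / Real.sqrt (u ^ 2 + 4)) u := by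
  have h1 : HasDerivAt (fun u : ℝ => u ^ 2 + 4) (2 * u) u := by
    simpa using (hasDerivAt_pow 2 u).add_const 4
  have h2 : HasDerivAt (fun u : ℝ => Real.sqrt (u ^ 2 + 4))
      (1 / (2 * Real.sqrt (u ^ 2 + 4)) * (2 * u)) u :=
    (Real.hasDerivAt_sqrt (by positivity)).comp u h1
  have h3 : HasDerivAt (fun u : ℝ => (u + Real.sqrt (u ^ 2 + 4)) / 2)
      ((1 + 1 / (2 * Real.sqrt (u ^ 2 + 4)) * (2 * u)) / 2) u :=
    ((hasDerivAt_id u).add h2).div_const 2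
  have h4 : HasDerivAt K2phi _ u := h3.pow 2
  convert h4 using 1
  have hp := K2p_pos u
  have hp2 := K2p_sq u
  field_simp
  ring_nf

lemma K2phi_mono : StrictMono K2phi := by
  refine strictMono_of_deriv_pos fun u => ?_
  rw [(K2phi_deriv u).deriv]
  have := K2x_pos u
  have := K2p_pos u
  positivity

lemma K2phi_image : K2phi '' Set.univ = Set.Ioi (0 : ℝ) := by
  apply Set.eq_of_subset_of_subset
  · rintro _ ⟨u, -, rfl⟩
    exact pow_pos (K2x_pos u) 2
  · intro w hw
    have hw' : (0 : ℝ) < w := hw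
    set s := Real.sqrt w with hs
    have hs0 : 0 < s := Real.sqrt_pos.mpr hw'
    have hs2 : s ^ 2 = w := Real.sq_sqrt hw'.le
    refine ⟨s - 1 / s, Set.mem_univ _, ?_⟩
    have key : Real.sqrt ((s - 1 / s) ^ 2 + 4) = s + 1 / s := by
      rw [show (s - 1 / s) ^ 2 + 4 = (s + 1 / s) ^ 2 by field_simp; ring]
      exact Real.sqrt_sq (by positivity)
    show ((s - 1 / s + Real.sqrt ((s - 1 / s) ^ 2 + 4)) / 2) ^ 2 = w
    rw [key, show (s - 1 / s + (s + 1 / s)) / 2 = s by ring, hs2]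

lemma K2key (u : ℝ) :
    2 * ((u + Real.sqrt (u ^ 2 + 4)) / 2) ^ 4 / Real.sqrt (u ^ 2 + 4) ≤
      1 + 2 * u + 15 / 8 * u ^ 2 + u ^ 3 + 35 / 128 * u ^ 4 := by
  set p := Real.sqrt (u ^ 2 + 4) with hpdef
  have hp := K2p_pos u
  have hp2 := K2p_sq u
  have hA : 2 * ((u + p) / 2) ^ 4 = ((u ^ 2 + 2) ^ 2 - 2) + u * p * (u ^ 2 + 2) := by
    linear_combination (p ^ 2 / 8 + 7 * u ^ 2 / 8 + 1 / 2 + u * p / 2) * hp2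
  have hQ : (0 : ℝ) < 1 + 15 / 8 * u ^ 2 + 35 / 128 * u ^ 4 := by positivity
  have hL : (0 : ℝ) ≤ (u ^ 2 + 2) ^ 2 - 2 := by nlinarith [sq_nonneg u]
  have hsq : ((u ^ 2 + 2) ^ 2 - 2) ^ 2 ≤ ((1 + 15 / 8 * u ^ 2 + 35 / 128 * u ^ 4) * p) ^ 2 := by
    rw [mul_pow, hp2]
    nlinarith [sq_nonneg (u ^ 3), sq_nonneg (u ^ 4), sq_nonneg (u ^ 5)]
  have hB : (u ^ 2 + 2) ^ 2 - 2 ≤ (1 + 15 / 8 * u ^ 2 + 35 / 128 * u ^ 4) * p :=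
    le_of_pow_le_pow_left₀ two_ne_zero (by positivity) hsq
  have h6 : 2 * ((u + p) / 2) ^ 4 ≤
      (1 + 15 / 8 * u ^ 2 + 35 / 128 * u ^ 4) * p + u * p * (u ^ 2 + 2) := by linarith
  have h7 := (div_le_div_iff_of_pos_right hp).mpr h6
  calc 2 * ((u + p) / 2) ^ 4 / p
      ≤ ((1 + 15 / 8 * u ^ 2 + 35 / 128 * u ^ 4) * p + u * p * (u ^ 2 + 2)) / p := h7
    _ = 1 + 2 * u + 15 / 8 * u ^ 2 + u ^ 3 + 35 / 128 * u ^ 4 := by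
        field_simp [show p ≠ 0 from ne_of_gt hp]; ring

lemma K2point (z : ℝ) (u : ℝ) :
    (2 * ((u + Real.sqrt (u ^ 2 + 4)) / 2) ^ 2 / Real.sqrt (u ^ 2 + 4)) *
        (K2phi u * Real.exp (-(z / 2) * (K2phi u + 1 / K2phi u))) ≤
      (1 + 2 * u + 15 / 8 * u ^ 2 + u ^ 3 + 35 / 128 * u ^ 4) *
        (Real.exp (-z) * Real.exp (-(z / 2) * u ^ 2)) := by
  have hp := K2p_pos u
  have hp2 := K2p_sq u
  have hx := K2x_pos u
  have hxne : (u + Real.sqrt (u ^ 2 + 4)) / 2 ≠ 0 := ne_of_gt hx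
  have hE : ((u + Real.sqrt (u ^ 2 + 4)) / 2) ^ 2 + 1 / ((u + Real.sqrt (u ^ 2 + 4)) / 2) ^ 2
      = u ^ 2 + 2 := by
    have h2 : (1 : ℝ) / ((u + Real.sqrt (u ^ 2 + 4)) / 2) ^ 2
        = ((Real.sqrt (u ^ 2 + 4) - u) / 2) ^ 2 := by
      rw [one_div, ← inv_pow, inv_eq_of_mul_eq_one_right (K2x_inv u)]
    rw [h2]
    linear_combination hp2 / 2
  have hexp : Real.exp (-(z / 2) * (u ^ 2 + 2))
      = Real.exp (-z) * Real.exp (-(z / 2) * u ^ 2) := by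
    rw [← Real.exp_add]; congr 1; ring
  have hφ : K2phi u = ((u + Real.sqrt (u ^ 2 + 4)) / 2) ^ 2 := rfl
  rw [hφ, hE, hexp]
  have hrw : (2 * ((u + Real.sqrt (u ^ 2 + 4)) / 2) ^ 2 / Real.sqrt (u ^ 2 + 4)) *
      (((u + Real.sqrt (u ^ 2 + 4)) / 2) ^ 2 *
        (Real.exp (-z) * Real.exp (-(z / 2) * u ^ 2)))
      = (2 * ((u + Real.sqrt (u ^ 2 + 4)) / 2) ^ 4 / Real.sqrt (u ^ 2 + 4)) *
        (Real.exp (-z) * Real.exp (-(z / 2) * u ^ 2)) := by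
    field_simp
  rw [hrw]
  exact mul_le_mul_of_nonneg_right (K2key u) (by positivity)

/-- Rosser–Schoenfeld bound: for z ≥ 1 and 0 ≤ y ≤ 1,
K₂(z,y) = (1/2)∫_y^∞ v·exp(−(z/2)(v+1/v)) dv ≤ √(π/2)·e^{−z}/√z·(1 + 15/(8z) + 105/(128z²)). -/
theorem K2_bound :
    ∀ (z y : ℝ), 1 ≤ z → 0 ≤ y → y ≤ 1 →
      (1 / 2) * (∫ v in Set.Ioi y, v * Real.exp (-(z / 2) * (v + 1 / v))) ≤
        Real.sqrt (Real.pi / 2) * Real.exp (-z) / Real.sqrt z *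
          (1 + 15 / (8 * z) + 105 / (128 * z ^ 2)) := by
  intro z y hz hy0 _
  have hz0 : (0 : ℝ) < z := by linarith
  have hb : (0 : ℝ) < z / 2 := by linarith
  set f : ℝ → ℝ := fun v => v * Real.exp (-(z / 2) * (v + 1 / v)) with hf
  -- integrability on Ioi 0
  have hcont : ContinuousOn f (Ioi 0) := by
    apply ContinuousOn.mul continuousOn_id
    apply Real.continuous_exp.comp_continuousOn
    apply ContinuousOn.mul continuousOn_const
    exact continuousOn_id.add (continuousOn_const.div continuousOn_id fun x hx => ne_of_gt hx)
  have hfint : IntegrableOn f (Ioi 0) := by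
    apply Integrable.mono' (g := fun v => 4 * Real.exp (-(1 / 4) * v))
      ((exp_neg_integrableOn_Ioi 0 (by norm_num : (0 : ℝ) < 1 / 4)).const_mul 4)
      (hcont.aestronglyMeasurable measurableSet_Ioi)
    filter_upwards [ae_restrict_mem measurableSet_Ioi] with v hv
    have hv0 : (0 : ℝ) < v := hv
    rw [Real.norm_eq_abs, abs_of_nonneg (by positivity)]
    have h1 : v ≤ 4 * Real.exp (v / 4) := by nlinarith [Real.add_one_le_exp (v / 4)]
    have hstep : f v ≤ v * Real.exp (-(1 / 2) * v) := by
      apply mul_le_mul_of_nonneg_left _ hv0.le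
      apply Real.exp_le_exp.mpr
      have hinv : 0 < 1 / v := by positivity
      nlinarith [hinv]
    have hstep2 : v * Real.exp (-(1 / 2) * v) ≤ 4 * Real.exp (-(1 / 4) * v) := by
      have h2 : Real.exp (-(1 / 2) * v) = Real.exp (-(v / 4)) * Real.exp (-(v / 4)) := by
        rw [← Real.exp_add]; congr 1; ring
      have h3 : v * Real.exp (-(v / 4)) ≤ 4 := by
        rw [Real.exp_neg, mul_inv_le_iff₀ (Real.exp_pos _)]
        linarith
      calc v * Real.exp (-(1 / 2) * v)
          = (v * Real.exp (-(v / 4))) * Real.exp (-(v / 4)) := by rw [h2]; ring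
        _ ≤ 4 * Real.exp (-(v / 4)) := mul_le_mul_of_nonneg_right h3 (Real.exp_pos _).le
        _ = 4 * Real.exp (-(1 / 4) * v) := by ring_nf
    linarith
  have hpos : 0 ≤ᵐ[volume.restrict (Ioi 0)] f := by
    filter_upwards [ae_restrict_mem measurableSet_Ioi] with v hv
    exact mul_nonneg (le_of_lt hv) (Real.exp_pos _).le
  have step1 : ∫ v in Ioi y, f v ≤ ∫ v in Ioi 0, f v :=
    setIntegral_mono_set hfint hpos (HasSubset.Subset.eventuallyLE (Ioi_subset_Ioi hy0))
  -- change of variables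
  have step2 : ∫ v in Ioi 0, f v
      = ∫ u : ℝ, |2 * ((u + Real.sqrt (u ^ 2 + 4)) / 2) ^ 2 / Real.sqrt (u ^ 2 + 4)| •
          f (K2phi u) := by
    rw [← K2phi_image, integral_image_eq_integral_abs_deriv_smul MeasurableSet.univ
      (fun x _ => (K2phi_deriv x).hasDerivWithinAt) (K2phi_mono.injective.injOn) f,
      Measure.restrict_univ]
  -- Gaussian-dominated bound
  have hI0 := int_pow_gauss 0 hb
  have hI1 := int_pow_gauss 1 hb
  have hI2 := int_pow_gauss 2 hb
  have hI3 := int_pow_gauss 3 hb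
  have hI4 := int_pow_gauss 4 hb
  have hfun : (fun u : ℝ => (1 + 2 * u + 15 / 8 * u ^ 2 + u ^ 3 + 35 / 128 * u ^ 4) *
      Real.exp (-(z / 2) * u ^ 2))
      = fun u : ℝ => u ^ 0 * Real.exp (-(z / 2) * u ^ 2)
          + 2 * (u ^ 1 * Real.exp (-(z / 2) * u ^ 2))
          + 15 / 8 * (u ^ 2 * Real.exp (-(z / 2) * u ^ 2))
          + u ^ 3 * Real.exp (-(z / 2) * u ^ 2)
          + 35 / 128 * (u ^ 4 * Real.exp (-(z / 2) * u ^ 2)) := by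
    funext u; ring
  have hpolyint : Integrable (fun u : ℝ =>
      (1 + 2 * u + 15 / 8 * u ^ 2 + u ^ 3 + 35 / 128 * u ^ 4) *
        Real.exp (-(z / 2) * u ^ 2)) := by
    rw [hfun]
    exact (((hI0.add (hI1.const_mul 2)).add (hI2.const_mul (15 / 8))).add hI3).add
      (hI4.const_mul (35 / 128))
  have hgint : Integrable (fun u : ℝ => Real.exp (-z) *
      ((1 + 2 * u + 15 / 8 * u ^ 2 + u ^ 3 + 35 / 128 * u ^ 4) *
        Real.exp (-(z / 2) * u ^ 2))) := hpolyint.const_mul _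
  have step3 : (∫ u : ℝ, |2 * ((u + Real.sqrt (u ^ 2 + 4)) / 2) ^ 2 / Real.sqrt (u ^ 2 + 4)| •
        f (K2phi u))
      ≤ ∫ u : ℝ, Real.exp (-z) *
          ((1 + 2 * u + 15 / 8 * u ^ 2 + u ^ 3 + 35 / 128 * u ^ 4) *
            Real.exp (-(z / 2) * u ^ 2)) := by
    refine integral_mono_of_nonneg ?_ hgint ?_
    · filter_upwards [] with u
      have hφ : 0 < K2phi u := pow_pos (K2x_pos u) 2
      exact smul_nonneg (abs_nonneg _) (mul_nonneg hφ.le (Real.exp_pos _).le)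
    · filter_upwards [] with u
      have habs : |2 * ((u + Real.sqrt (u ^ 2 + 4)) / 2) ^ 2 / Real.sqrt (u ^ 2 + 4)|
          = 2 * ((u + Real.sqrt (u ^ 2 + 4)) / 2) ^ 2 / Real.sqrt (u ^ 2 + 4) :=
        abs_of_pos (div_pos (mul_pos two_pos (pow_pos (K2x_pos u) 2)) (K2p_pos u))
      rw [smul_eq_mul, habs]
      have h := K2point z u
      calc (2 * ((u + Real.sqrt (u ^ 2 + 4)) / 2) ^ 2 / Real.sqrt (u ^ 2 + 4)) * f (K2phi u)
          = (2 * ((u + Real.sqrt (u ^ 2 + 4)) / 2) ^ 2 / Real.sqrt (u ^ 2 + 4)) *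
            (K2phi u * Real.exp (-(z / 2) * (K2phi u + 1 / K2phi u))) := rfl
        _ ≤ (1 + 2 * u + 15 / 8 * u ^ 2 + u ^ 3 + 35 / 128 * u ^ 4) *
            (Real.exp (-z) * Real.exp (-(z / 2) * u ^ 2)) := h
        _ = Real.exp (-z) * ((1 + 2 * u + 15 / 8 * u ^ 2 + u ^ 3 + 35 / 128 * u ^ 4) *
            Real.exp (-(z / 2) * u ^ 2)) := by ring
  -- compute the Gaussian integral
  have step4 : (∫ u : ℝ, Real.exp (-z) *
        ((1 + 2 * u + 15 / 8 * u ^ 2 + u ^ 3 + 35 / 128 * u ^ 4) *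
          Real.exp (-(z / 2) * u ^ 2)))
      = Real.exp (-z) * (Real.sqrt (π / (z / 2)) *
          (1 + 15 / (8 * z) + 105 / (128 * z ^ 2))) := by
    rw [integral_const_mul, hfun]
    have hS2 : Integrable (fun u : ℝ => u ^ 0 * Real.exp (-(z / 2) * u ^ 2)
        + 2 * (u ^ 1 * Real.exp (-(z / 2) * u ^ 2))) := hI0.add (hI1.const_mul 2)
    have hS3 : Integrable (fun u : ℝ => u ^ 0 * Real.exp (-(z / 2) * u ^ 2)
        + 2 * (u ^ 1 * Real.exp (-(z / 2) * u ^ 2))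
        + 15 / 8 * (u ^ 2 * Real.exp (-(z / 2) * u ^ 2))) := hS2.add (hI2.const_mul (15 / 8))
    have hS4 : Integrable (fun u : ℝ => u ^ 0 * Real.exp (-(z / 2) * u ^ 2)
        + 2 * (u ^ 1 * Real.exp (-(z / 2) * u ^ 2))
        + 15 / 8 * (u ^ 2 * Real.exp (-(z / 2) * u ^ 2))
        + u ^ 3 * Real.exp (-(z / 2) * u ^ 2)) := hS3.add hI3
    rw [integral_add hS4 (hI4.const_mul (35 / 128)), integral_add hS3 hI3,
      integral_add hS2 (hI2.const_mul (15 / 8)), integral_add hI0 (hI1.const_mul 2),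
      integral_const_mul, integral_const_mul, integral_const_mul]
    rw [mom0_gauss hb, mom2_gauss hb, mom4_gauss hb,
      gauss_odd 1 odd_one, gauss_odd 3 (by decide)]
    have hzne : z ≠ 0 := ne_of_gt hz0
    field_simp
    ring
  -- final constant identification
  have hsqrt : (1 / 2 : ℝ) * Real.sqrt (π / (z / 2)) = Real.sqrt (π / 2) / Real.sqrt z := by
    have h1 : π / (z / 2) = 2 * π / z := by field_simp
    have h2 : Real.sqrt (2 * π / z) = Real.sqrt (2 * π) / Real.sqrt z :=
      Real.sqrt_div (by positivity) z
    have h3 : Real.sqrt (2 * π) = 2 * Real.sqrt (π / 2) := by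
      rw [show (2 : ℝ) * π = 4 * (π / 2) by ring, show (4 : ℝ) = 2 ^ 2 by norm_num,
        Real.sqrt_mul (by positivity), Real.sqrt_sq (by norm_num)]
    rw [h1, h2, h3]
    ring
  calc (1 / 2) * ∫ v in Ioi y, f v
      ≤ (1 / 2) * ∫ u : ℝ, Real.exp (-z) *
          ((1 + 2 * u + 15 / 8 * u ^ 2 + u ^ 3 + 35 / 128 * u ^ 4) *
            Real.exp (-(z / 2) * u ^ 2)) := by
        rw [step2] at step1
        linarith [le_trans step1 step3]
    _ = ((1 / 2) * Real.sqrt (π / (z / 2))) * Real.exp (-z) *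
          (1 + 15 / (8 * z) + 105 / (128 * z ^ 2)) := by rw [step4]; ring
    _ = Real.sqrt (π / 2) * Real.exp (-z) / Real.sqrt z *
          (1 + 15 / (8 * z) + 105 / (128 * z ^ 2)) := by rw [hsqrt]; ring
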